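/- Completeness of the Groth–Sahai NIWI proof for a pairing-product equation (Equation (4)): let k, l ∈ ℕ, let A : Fin l → 𝔾₁, B : Fin k → 𝔾₂, Γ : Matrix (Fin k) (Fin l) R, and t ∈ 𝔾₃ describe a pairing-product equation, and suppose the witnesses X : Fin k → 𝔾₁ and Y : Fin l → 𝔾₂ satisfy it, i.e. Σⱼ e(Aⱼ, Yⱼ) + Σᵢ e(Xᵢ, Bᵢ) + Σᵢ Σⱼ Γᵢⱼ • e(Xᵢ, Yⱼ) = t. Then for all commitment randomness R : Fin k → R and S : Fin l → R and all CRS elements U ∈ 𝔾₁, V ∈ 𝔾₂, the commitments Cᵢ = Xᵢ + Rᵢ • U and Dⱼ = Yⱼ + Sⱼ • V together with the proof elements π = Σᵢ Rᵢ • Bᵢ + Σᵢ Σⱼ (Rᵢ·Γᵢⱼ) • Yⱼ + (Σᵢ Σⱼ Rᵢ·Γᵢⱼ·Sⱼ) • V ∈ 𝔾₂ and θ = Σⱼ Sⱼ • Aⱼ + Σᵢ Σⱼ (Sⱼ·Γᵢⱼ) • Xᵢ ∈ 𝔾₁ satisfy the verification equation Σⱼ e(Aⱼ, Dⱼ) +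 Σᵢ e(Cᵢ, Bᵢ) + Σᵢ Σⱼ Γᵢⱼ • e(Cᵢ, Dⱼ) = t + e(U, π) + e(θ, V). -/
import Mathlib


/-- Completeness of the Groth–Sahai NIWI proof for a pairing-product equation
(Equation (4)): if the witnesses `(X, Y)` satisfy the pairing-product equation
described by `(A, B, Γ, t)`, then for any commitment randomness `(Rv, S)` and
CRS elements `(U, V)`, the commitments `C, D` and proof elements `(π, θ)`
produced by the NIWI prover satisfy the verification equation. -/
theorem niwi_proof_complete {R : Type*} [CommRing R]
    {G₁ G₂ G₃ : Type*} [AddCommGroup G₁] [AddCommGroup G₂] [AddCommGroup G₃]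
    [Module R G₁] [Module R G₂] [Module R G₃]
    (e : G₁ →ₗ[R] G₂ →ₗ[R] G₃)
    (k l : ℕ)
    (A : Fin l → G₁) (B : Fin k → G₂) (Γ : Matrix (Fin k) (Fin l) R) (t : G₃)
    (X : Fin k → G₁) (Y : Fin l → G₂)
    (hsat : ∑ j, e (A j) (Y j) + ∑ i, e (X i) (B i)
        + ∑ i, ∑ j, Γ i j • e (X i) (Y j) = t)
    (Rv : Fin k → R) (S : Fin l → R) (U : G₁) (V : G₂)
    (C : Fin k → G₁) (D : Fin l → G₂) (π : G₂) (θ : G₁)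
    (hC : ∀ i, C i = X i + Rv i • U)
    (hD : ∀ j, D j = Y j + S j • V)
    (hπ : π = ∑ i, Rv i • B i + ∑ i, ∑ j, (Rv i * Γ i j) • Y j
        + (∑ i, ∑ j, Rv i * Γ i j * S j) • V)
    (hθ : θ = ∑ j, S j • A j + ∑ i, ∑ j, (S j * Γ i j) • X i) :
    ∑ j, e (A j) (D j) + ∑ i, e (C i) (B i)
      + ∑ i, ∑ j, Γ i j • e (C i) (D j) = t + e U π + e θ V := by
  subst hπ hθ
  simp only [hC, hD, map_add, map_smul, map_sum, LinearMap.add_apply,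
    LinearMap.smul_apply, LinearMap.sum_apply, smul_add, Finset.sum_add_distrib,
    smul_smul]
  rw [← hsat]
  simp only [Finset.sum_smul, mul_comm, mul_left_comm]
  abel
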